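/- Let G be a connected simple graph on vertex set {1,...,n} with Laplacian L and a single leader, vertex 1, and let b = e_1 be the first standard basis vector of ℝ^n. Let Γ = [b, (−L)b, (−L)^2 b, ..., (−L)^{n−1} b] be the controllability matrix. Then rank(Γ) ≥ 1 + max_{i} d(i,1), i.e., the rank of the controllability matrix is at least the number of cells of the distance partition with respect to the leader. -/

import Mathlib

open Matrix SimpleGraph

lemma adj_step {V : Type*} {G : SimpleGraph V} {i j : V} {k : ℕ}
    (h : G.dist i j = k + 1) : ∃ m, G.Adj i m ∧ G.dist m j = k := by
  obtain ⟨p, hp⟩ := SimpleGraph.exists_walk_of_dist_ne_zero (G := G) (u := i) (v := j) (by omega)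
  cases p with
  | nil => rw [h] at hp; simp at hp
  | @cons _ m _ h' q =>
      have hq : q.length = k := by
        rw [h] at hp; simpa using hp
      refine ⟨m, h', le_antisymm (hq ▸ SimpleGraph.dist_le q) ?_⟩
      obtain ⟨w, hw⟩ := (SimpleGraph.Reachable.exists_walk_length_eq_dist ⟨q⟩ : _)
      have h3 := SimpleGraph.dist_le (SimpleGraph.Walk.cons h' w)
      rw [SimpleGraph.Walk.length_cons, hw, h] at h3
      omega

lemma neg_lap_entry {n : ℕ} (G : SimpleGraph (Fin n)) [DecidableRel G.Adj] (m l : Fin n) :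
    (-(G.lapMatrix ℝ)) m l
      = (if G.Adj m l then (1:ℝ) else 0) - (if m = l then (G.degree m : ℝ) else 0) := by
  simp [SimpleGraph.lapMatrix, SimpleGraph.degMatrix, Matrix.sub_apply, Matrix.neg_apply,
    Matrix.diagonal_apply]

lemma key {n : ℕ} (G : SimpleGraph (Fin n)) [DecidableRel G.Adj] (hconn : G.Connected) :
    ∀ k : ℕ, ∀ i l : Fin n,
      (k < G.dist i l → ((-(G.lapMatrix ℝ)) ^ k) i l = 0) ∧
      (G.dist i l = k → 0 < ((-(G.lapMatrix ℝ)) ^ k) i l) := by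
  intro k
  induction k with
  | zero =>
    intro i l
    constructor
    · intro h
      have hne : i ≠ l := by rintro rfl; simp [SimpleGraph.dist_self] at h
      simp [Matrix.one_apply, hne]
    · intro h
      have : i = l :=
        (SimpleGraph.dist_eq_zero_iff_eq_or_not_reachable.mp h).resolve_right
          (not_not.2 (hconn.preconnected i l))
      subst this; simp
  | succ k IH =>
    intro i l
    have hterm0 : ∀ m : Fin n, G.dist i l = k + 1 →
        0 ≤ ((-(G.lapMatrix ℝ)) ^ k) i m * (-(G.lapMatrix ℝ)) m l := by
      intro m hd
      rcases eq_or_ne m l with rfl | hml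
      · have h1 : ((-(G.lapMatrix ℝ)) ^ k) i m = 0 := (IH i m).1 (by omega)
        simp [h1]
      · by_cases ha : G.Adj m l
        · have h1 : G.dist m l = 1 := SimpleGraph.dist_eq_one_iff_adj.mpr ha
          have htri : G.dist i l ≤ G.dist i m + G.dist m l := hconn.dist_triangle
          have hk : k ≤ G.dist i m := by omega
          rcases eq_or_lt_of_le hk with heq | hlt
          · have h2 : 0 < ((-(G.lapMatrix ℝ)) ^ k) i m := (IH i m).2 heq.symm
            have h3 : (-(G.lapMatrix ℝ)) m l = 1 := by
              rw [neg_lap_entry]; simp [ha, hml]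
            rw [h3]; positivity
          · have h2 : ((-(G.lapMatrix ℝ)) ^ k) i m = 0 := (IH i m).1 hlt
            simp [h2]
        · have h3 : (-(G.lapMatrix ℝ)) m l = 0 := by
            rw [neg_lap_entry]; simp [ha, hml]
          simp [h3]
    constructor
    · intro h
      rw [pow_succ, Matrix.mul_apply]
      refine Finset.sum_eq_zero fun m _ => ?_
      rcases eq_or_ne m l with rfl | hml
      · have h1 : ((-(G.lapMatrix ℝ)) ^ k) i m = 0 := (IH i m).1 (by omega)
        simp [h1]
      · by_cases ha : G.Adj m l
        · have h1 : G.dist m l = 1 := SimpleGraph.dist_eq_one_iff_adj.mpr ha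
          have htri : G.dist i l ≤ G.dist i m + G.dist m l := hconn.dist_triangle
          have h2 : ((-(G.lapMatrix ℝ)) ^ k) i m = 0 := (IH i m).1 (by omega)
          simp [h2]
        · have h3 : (-(G.lapMatrix ℝ)) m l = 0 := by
            rw [neg_lap_entry]; simp [ha, hml]
          simp [h3]
    · intro h
      rw [pow_succ, Matrix.mul_apply]
      have hd' : G.dist l i = k + 1 := by rw [SimpleGraph.dist_comm]; exact h
      obtain ⟨m0, hadj, hdm0⟩ := adj_step hd'
      refine Finset.sum_pos' (fun m _ => hterm0 m h) ⟨m0, Finset.mem_univ m0, ?_⟩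
      have h2 : 0 < ((-(G.lapMatrix ℝ)) ^ k) i m0 :=
        (IH i m0).2 (by rw [SimpleGraph.dist_comm]; exact hdm0)
      have hne : m0 ≠ l := by
        rintro rfl; exact G.loopless.irrefl _ hadj
      have h3 : (-(G.lapMatrix ℝ)) m0 l = 1 := by
        rw [neg_lap_entry]; simp [hadj.symm, hne]
      rw [h3]; positivity

theorem stmt_6 {n : ℕ} (hn : 0 < n) (G : SimpleGraph (Fin n)) [DecidableRel G.Adj]
    (hconn : G.Connected)
    (Γ : Matrix (Fin n) (Fin n) ℝ)
    (hΓ : ∀ (i r : Fin n),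
      Γ i r = ((-(G.lapMatrix ℝ)) ^ (r : ℕ) *ᵥ Pi.single (⟨0, hn⟩ : Fin n) 1) i) :
    1 + Finset.univ.sup (fun i : Fin n => G.dist i ⟨0, hn⟩) ≤ Γ.rank := by
  set l : Fin n := ⟨0, hn⟩ with hl
  set D := Finset.univ.sup (fun i : Fin n => G.dist i l) with hD
  -- every distance is < n
  have hdlt : ∀ i : Fin n, G.dist i l < n := by
    intro i
    obtain ⟨p, hp, hlen⟩ := hconn.exists_path_of_dist i l
    have h1 := hp.length_lt
    rw [hlen, Fintype.card_fin] at h1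
    exact h1
  have hDlt : D < n := by
    rw [hD]
    exact (Finset.sup_lt_iff hn).mpr fun i _ => hdlt i
  -- all distances 0..D are achieved
  obtain ⟨i0, -, hi0⟩ := Finset.exists_mem_eq_sup Finset.univ
    ⟨l, Finset.mem_univ l⟩ (fun i : Fin n => G.dist i l)
  have reach : ∀ t : ℕ, ∃ v, G.dist v l = D - t := by
    intro t; induction t with
    | zero => exact ⟨i0, by omega⟩
    | succ t IHt =>
      obtain ⟨v, hv⟩ := IHt
      by_cases hDt : D ≤ t
      · exact ⟨l, by rw [SimpleGraph.dist_self]; omega⟩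
      · have hv' : G.dist v l = (D - (t + 1)) + 1 := by omega
        obtain ⟨m, -, hm⟩ := adj_step hv'
        exact ⟨m, hm⟩
  have achieve : ∀ m : ℕ, m ≤ D → ∃ v, G.dist v l = m := by
    intro m hm
    obtain ⟨v, hv⟩ := reach (D - m)
    exact ⟨v, by omega⟩
  -- entries of Γ
  have hent : ∀ (i r : Fin n), Γ i r = ((-(G.lapMatrix ℝ)) ^ (r : ℕ)) i l := by
    intro i r
    rw [hΓ, Matrix.mulVec_single]
    simp
  have hembed : ∀ k : Fin (D + 1), (k : ℕ) < n :=
    fun k => lt_of_le_of_lt (Nat.lt_succ_iff.mp k.isLt) hDlt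
  set f : Fin (D + 1) → (Fin n → ℝ) := fun k i => Γ i ⟨(k : ℕ), hembed k⟩ with hf
  have hli : LinearIndependent ℝ f := by
    rw [Fintype.linearIndependent_iff]
    intro g hg
    have hg' : ∀ i : Fin n, ∑ k, g k * f k i = 0 := by
      intro i
      have h2 := congrFun hg i
      simpa [Finset.sum_apply] using h2
    have main : ∀ t : ℕ, ∀ k : Fin (D + 1), D - (k : ℕ) = t → g k = 0 := by
      intro t
      induction t using Nat.strong_induction_on with
      | _ t IHt =>
        intro k hk
        have hkD : (k : ℕ) ≤ D := Nat.lt_succ_iff.mp k.isLt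
        obtain ⟨v, hv⟩ := achieve k hkD
        have heq := hg' v
        rw [Finset.sum_eq_single k] at heq
        · have hpos : 0 < f k v := by
            rw [hf]
            simp only []
            rw [hent]
            exact (key G hconn k v l).2 hv
          rcases mul_eq_zero.mp heq with h | h
          · exact h
          · exact absurd h (ne_of_gt hpos)
        · intro k' _ hne
          rcases Nat.lt_or_ge (k' : ℕ) (k : ℕ) with hlt | hge
          · have hz : f k' v = 0 := by
              rw [hf]
              simp only []
              rw [hent]
              exact (key G hconn k' v l).1 (by omega)
            rw [hz, mul_zero]
          · have hgt : (k : ℕ) < (k' : ℕ) :=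
              lt_of_le_of_ne hge (fun hc => hne (Fin.ext hc.symm))
            have hk'D : (k' : ℕ) ≤ D := Nat.lt_succ_iff.mp k'.isLt
            rw [IHt (D - (k' : ℕ)) (by omega) k' rfl, zero_mul]
        · intro habs
          exact absurd (Finset.mem_univ k) habs
    intro k
    exact main (D - (k : ℕ)) k rfl
  have hmem : ∀ k, f k ∈ LinearMap.range Γ.mulVecLin := by
    intro k
    refine ⟨Pi.single (⟨(k : ℕ), hembed k⟩ : Fin n) 1, ?_⟩
    ext i
    simp [Matrix.mulVecLin_apply, Matrix.mulVec_single, hf]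
  have hspan : Submodule.span ℝ (Set.range f) ≤ LinearMap.range Γ.mulVecLin :=
    Submodule.span_le.mpr (Set.range_subset_iff.mpr hmem)
  calc 1 + D = Fintype.card (Fin (D + 1)) := by simp [add_comm]
    _ = Module.finrank ℝ (Submodule.span ℝ (Set.range f)) := (finrank_span_eq_card hli).symm
    _ ≤ Module.finrank ℝ (LinearMap.range Γ.mulVecLin) := Submodule.finrank_mono hspan
    _ = Γ.rank := rfl
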